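/- Assume (H1) and (H2), let v ≠ 0, and let x_v be a billiard solution with initial velocity v having exactly k impact times. Then there exists c > 0 such that every billiard solution with initial velocity c·v has at least k + 2 impact times. -/

import Mathlib

open Set MeasureTheory Filter Topology

/-- The set of impact times of a trajectory `x` on the time interval `(0, T]`
in the one-dimensional billiard table `K = [-a, a]`. -/
def impactSet (T a : ℝ) (x : ℝ → ℝ) : Set ℝ :=
  {t | t ∈ Set.Ioc 0 T ∧ |x t| = a}

/-- A billiard solution of the one-dimensional impulsive Cauchy problem
`x'' = f(t, x)` in `K = [-a, a]`, `x(0) = 0`, with initial velocity `v` and the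
elastic reflection law `x'(s+) = -x'(s-)` at impact times `s < T`.

The function `xd` plays the role of the derivative of `x` away from the (finitely
many) impact times; on each connected component of `[0, T]` minus the impact set it
is absolutely continuous with `xd' = f(t, x(t))` a.e., which is expressed by the
integral identity `accel`.  One-sided limits of `xd` at impact times exist
(`leftLimExists`, and `reflect` then yields the right limits), and the reflection
law is `reflect`. -/
structure BilliardSol (T a : ℝ) (f : ℝ → ℝ → ℝ) (v : ℝ) where
  x : ℝ → ℝ
  xd : ℝ → ℝ
  cont : ContinuousOn x (Set.Icc 0 T)
  init : x 0 = 0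
  confined : ∀ t ∈ Set.Icc 0 T, |x t| ≤ a
  finImpacts : (impactSet T a x).Finite
  hasDeriv : ∀ t ∈ Set.Icc 0 T \ impactSet T a x,
      HasDerivWithinAt x (xd t) (Set.Icc 0 T) t
  initVel : xd 0 = v
  accel : ∀ s u : ℝ, s ∈ Set.Icc 0 T → u ∈ Set.Icc 0 T → s ≤ u →
      (∀ τ ∈ Set.Icc s u, τ ∉ impactSet T a x) →
      xd u = xd s + ∫ τ in s..u, f τ (x τ)
  leftLimExists : ∀ s ∈ impactSet T a x,
      ∃ L : ℝ, Filter.Tendsto xd (nhdsWithin s (Set.Iio s \ impactSet T a x)) (nhds L)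
  reflect : ∀ s ∈ impactSet T a x, s < T → ∀ L : ℝ,
      Filter.Tendsto xd (nhdsWithin s (Set.Iio s \ impactSet T a x)) (nhds L) →
      Filter.Tendsto xd (nhdsWithin s (Set.Ioi s \ impactSet T a x)) (nhds (-L))

/-- if a billiard solution with initial velocity `v ≠ 0` has exactly
`k` impact times, then there is `c > 0` such that every billiard solution with
initial velocity `c · v` has at least `k + 2` impact times. -/
lemma neBot_left_aux {S : Set ℝ} (hS : S.Finite) (s : ℝ) : (𝓝[Set.Iio s \ S] s).NeBot := by
  have h1 : Set.Iio s \ S = Set.Iio s ∩ (S \ {s})ᶜ := by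
    ext τ; by_cases hτ : τ = s
    · simp [hτ]
    · simp [hτ]
  rw [h1, nhdsWithin_inter_of_mem']
  · exact nhdsLT_neBot s
  · exact mem_nhdsWithin_of_mem_nhds
      ((((hS.diff : (S \ {s}).Finite)).isClosed.isOpen_compl).mem_nhds (by simp))

lemma neBot_right_aux {S : Set ℝ} (hS : S.Finite) (s : ℝ) : (𝓝[Set.Ioi s \ S] s).NeBot := by
  have h1 : Set.Ioi s \ S = Set.Ioi s ∩ (S \ {s})ᶜ := by
    ext τ; by_cases hτ : τ = s
    · simp [hτ]
    · simp [hτ]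
  rw [h1, nhdsWithin_inter_of_mem']
  · exact nhdsGT_neBot s
  · exact mem_nhdsWithin_of_mem_nhds
      ((((hS.diff : (S \ {s}).Finite)).isClosed.isOpen_compl).mem_nhds (by simp))

lemma billiard_time_bound (T a : ℝ) (hT : 0 < T) (ha : 0 < a)
    (f : ℝ → ℝ → ℝ) (m : ℝ → ℝ)
    (hm_int : IntervalIntegrable m volume 0 T)
    (hm_nonneg : ∀ t ∈ Set.Icc 0 T, 0 ≤ m t)
    (hf_bound : ∀ t ∈ Set.Icc 0 T, ∀ y : ℝ, |f t y| ≤ m t)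
    (w : ℝ) (hbig : 2 * (∫ τ in (0:ℝ)..T, m τ) < |w|)
    (y : BilliardSol T a f w) :
    T ≤ ((impactSet T a y.x).ncard + 1) * (2 * a / (|w| - ∫ τ in (0:ℝ)..T, m τ)) := by
  set S : Set ℝ := impactSet T a y.x with hSdef
  set M : ℝ := ∫ τ in (0:ℝ)..T, m τ with hMdef
  set V : ℝ := |w| - M with hVdef
  have hSsub : S ⊆ Set.Ioc 0 T := fun t ht => ht.1
  have hSfin : S.Finite := y.finImpacts
  -- integrability of m on subintervals
  have hmint : ∀ p q : ℝ, 0 ≤ p → p ≤ q → q ≤ T → IntervalIntegrable m volume p q := by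
    intro p q hp hpq hq
    refine hm_int.mono_set ?_
    rw [Set.uIcc_of_le hpq, Set.uIcc_of_le hT.le]
    exact Set.Icc_subset_Icc hp hq
  have hInt0 : ∀ p q : ℝ, 0 ≤ p → p ≤ q → q ≤ T → 0 ≤ ∫ τ in p..q, m τ := by
    intro p q hp hpq hq
    exact intervalIntegral.integral_nonneg hpq
      (fun u hu => hm_nonneg u ⟨hp.trans hu.1, hu.2.trans hq⟩)
  have hsplit : ∀ p q r : ℝ, 0 ≤ p → p ≤ q → q ≤ r → r ≤ T →
      (∫ τ in p..r, m τ) = (∫ τ in p..q, m τ) + ∫ τ in q..r, m τ := by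
    intro p q r hp hpq hqr hr
    exact (intervalIntegral.integral_add_adjacent_intervals
      (hmint p q hp hpq (hqr.trans hr)) (hmint q r (hp.trans hpq) hqr hr)).symm
  have hM0 : 0 ≤ M := hInt0 0 T le_rfl hT.le le_rfl
  have hMV : M < V := by rw [hVdef]; linarith
  have hV0 : 0 < V := lt_of_le_of_lt hM0 hMV
  have hIleM : ∀ p q : ℝ, 0 ≤ p → p ≤ q → q ≤ T → (∫ τ in p..q, m τ) ≤ M := by
    intro p q hp hpq hq
    have h1 := hsplit 0 p q le_rfl hp hpq hq
    have h2 := hsplit 0 q T le_rfl (hp.trans hpq) hq le_rfl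
    have h3 := hInt0 0 p le_rfl hp (hpq.trans hq)
    have h4 := hInt0 q T (hp.trans hpq) hq le_rfl
    rw [hMdef]; linarith
  have hFbound : ∀ p q : ℝ, 0 ≤ p → p ≤ q → q ≤ T →
      |∫ τ in p..q, f τ (y.x τ)| ≤ ∫ τ in p..q, m τ := by
    intro p q hp hpq hq
    have hae : ∀ᵐ t ∂(volume.restrict (Set.uIoc p q)), ‖f t (y.x t)‖ ≤ m t := by
      refine (ae_restrict_mem measurableSet_uIoc).mono fun t ht => ?_
      rw [Set.uIoc_of_le hpq] at ht
      rw [Real.norm_eq_abs]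
      exact hf_bound t ⟨hp.trans ht.1.le, ht.2.trans hq⟩ (y.x t)
    calc |∫ τ in p..q, f τ (y.x τ)| = ‖∫ τ in p..q, f τ (y.x τ)‖ := (Real.norm_eq_abs _).symm
      _ ≤ |∫ τ in p..q, m τ| := intervalIntegral.norm_integral_le_abs_of_norm_le hae (hmint p q hp hpq hq)
      _ = ∫ τ in p..q, m τ := abs_of_nonneg (hInt0 p q hp hpq hq)
  have habs2a : ∀ p q : ℝ, p ∈ Set.Icc 0 T → q ∈ Set.Icc 0 T → |y.x q - y.x p| ≤ 2 * a := by
    intro p q hp hq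
    have h1 := y.confined p hp
    have h2 := y.confined q hq
    have h3 : |y.x q - y.x p| ≤ |y.x q| + |y.x p| := abs_sub (y.x q) (y.x p)
    linarith
  -- Lemma A: speed lower bound
  have speedA : ∀ n : ℕ, ∀ t : ℝ, t ∈ Set.Icc 0 T → t ∉ S → (S ∩ Set.Iio t).ncard ≤ n →
      |w| - (∫ τ in (0:ℝ)..t, m τ) ≤ |y.xd t| := by
    have hbase : ∀ t : ℝ, t ∈ Set.Icc 0 T → t ∉ S → S ∩ Set.Iio t = ∅ →
        |w| - (∫ τ in (0:ℝ)..t, m τ) ≤ |y.xd t| := by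
      intro t ht htS hemp
      have hno : ∀ τ ∈ Set.Icc 0 t, τ ∉ S := by
        intro τ hτ hτS
        rcases lt_or_eq_of_le hτ.2 with h | h
        · have hmem : τ ∈ S ∩ Set.Iio t := ⟨hτS, h⟩
          rw [hemp] at hmem
          exact hmem
        · exact htS (h ▸ hτS)
      have hacc := y.accel 0 t ⟨le_rfl, hT.le⟩ ht ht.1 hno
      rw [y.initVel] at hacc
      have hb := hFbound 0 t le_rfl ht.1 ht.2
      have hW : |w| ≤ |y.xd t| + |∫ τ in (0:ℝ)..t, f τ (y.x τ)| := by
        have he : w = y.xd t - ∫ τ in (0:ℝ)..t, f τ (y.x τ) := by linarith [hacc]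
        have h3 := abs_sub (y.xd t) (∫ τ in (0:ℝ)..t, f τ (y.x τ))
        rw [← he] at h3
        exact h3
      linarith
    intro n
    induction n with
    | zero =>
      intro t ht htS hc
      have hfin : (S ∩ Set.Iio t).Finite := hSfin.subset Set.inter_subset_left
      exact hbase t ht htS ((Set.ncard_eq_zero hfin).mp (Nat.le_zero.mp hc))
    | succ n ih =>
      intro t ht htS hc
      by_cases hemp : S ∩ Set.Iio t = ∅
      · exact hbase t ht htS hemp
      · have hAfin : (S ∩ Set.Iio t).Finite := hSfin.subset Set.inter_subset_left
        have hAne : (S ∩ Set.Iio t).Nonempty := Set.nonempty_iff_ne_empty.mpr hemp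
        obtain ⟨s, hsA, hsmax'⟩ := Set.Finite.exists_maximalFor id _ hAfin hAne
        have hsmax : ∀ b ∈ S ∩ Set.Iio t, b ≤ s := by
          intro b hb
          by_contra hbs
          push_neg at hbs
          exact absurd (hsmax' hb hbs.le) (not_le.mpr hbs)
        have hsS : s ∈ S := hsA.1
        have hst : s < t := hsA.2
        have hs0 : 0 < s := (hSsub hsS).1
        have hsT' : s ≤ T := (hSsub hsS).2
        have hsT : s < T := lt_of_lt_of_le hst ht.2
        obtain ⟨L, hL⟩ := y.leftLimExists s hsS
        have hR := y.reflect s hsS hsT L hL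
        haveI := neBot_left_aux hSfin s
        haveI := neBot_right_aux hSfin s
        have hev1 : ∀ᶠ t' in 𝓝[Set.Iio s \ S] s,
            |w| - (∫ τ in (0:ℝ)..s, m τ) ≤ |y.xd t'| := by
          have h0 : ∀ᶠ t' in 𝓝[Set.Iio s \ S] s, 0 < t' :=
            eventually_nhdsWithin_of_eventually_nhds (eventually_gt_nhds hs0)
          filter_upwards [h0, self_mem_nhdsWithin] with t' ht0 ht'
          have ht'sub : t' < s := ht'.1
          have ht'Icc : t' ∈ Set.Icc 0 T := ⟨ht0.le, (ht'sub.trans hsT).le⟩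
          have hsubA : S ∩ Set.Iio t' ⊆ (S ∩ Set.Iio t) \ {s} := by
            intro τ hτ
            refine ⟨⟨hτ.1, hτ.2.trans (ht'sub.trans hst)⟩, ?_⟩
            intro h
            rw [Set.mem_singleton_iff] at h
            rw [h] at hτ
            exact absurd (hτ.2.trans ht'sub) (lt_irrefl s)
          have hcard : (S ∩ Set.Iio t').ncard ≤ n := by
            have h1 : (S ∩ Set.Iio t').ncard ≤ ((S ∩ Set.Iio t) \ {s}).ncard :=
              Set.ncard_le_ncard hsubA hAfin.diff
            rw [Set.ncard_diff_singleton_of_mem hsA] at h1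
            omega
          have hih := ih t' ht'Icc ht'.2 hcard
          have hmono : (∫ τ in (0:ℝ)..t', m τ) ≤ ∫ τ in (0:ℝ)..s, m τ := by
            have h1 := hsplit 0 t' s le_rfl ht0.le ht'sub.le hsT'
            have h2 := hInt0 t' s ht0.le ht'sub.le hsT'
            linarith
          linarith
        have hLlb : |w| - (∫ τ in (0:ℝ)..s, m τ) ≤ |L| := ge_of_tendsto hL.abs hev1
        have hev2 : ∀ᶠ t' in 𝓝[Set.Ioi s \ S] s,
            |y.xd t'| ≤ |y.xd t| + ∫ τ in s..t, m τ := by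
          have h0 : ∀ᶠ t' in 𝓝[Set.Ioi s \ S] s, t' < t :=
            eventually_nhdsWithin_of_eventually_nhds (eventually_lt_nhds hst)
          filter_upwards [h0, self_mem_nhdsWithin] with t' htlt ht'
          have hst' : s < t' := ht'.1
          have ht'T : t' ≤ T := htlt.le.trans ht.2
          have ht'Icc : t' ∈ Set.Icc 0 T := ⟨(hs0.trans hst').le, ht'T⟩
          have hno : ∀ τ ∈ Set.Icc t' t, τ ∉ S := by
            intro τ hτ hτS
            rcases lt_or_eq_of_le hτ.2 with h | h
            · exact absurd (hsmax τ ⟨hτS, h⟩) (not_le.mpr (lt_of_lt_of_le hst' hτ.1))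
            · exact htS (h ▸ hτS)
          have hacc := y.accel t' t ht'Icc ht htlt.le hno
          have hb := hFbound t' t (hs0.trans hst').le htlt.le ht.2
          have hmono : (∫ τ in t'..t, m τ) ≤ ∫ τ in s..t, m τ := by
            have h1 := hsplit s t' t hs0.le hst'.le htlt.le ht.2
            have h2 := hInt0 s t' hs0.le hst'.le ht'T
            linarith
          have hW : |y.xd t'| ≤ |y.xd t| + |∫ τ in t'..t, f τ (y.x τ)| := by
            have he : y.xd t' = y.xd t - ∫ τ in t'..t, f τ (y.x τ) := by linarith [hacc]
            rw [he]
            exact abs_sub _ _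
          linarith
        have hLub : |L| ≤ |y.xd t| + ∫ τ in s..t, m τ := by
          have habs : Filter.Tendsto (fun t' => |y.xd t'|) (𝓝[Set.Ioi s \ S] s) (𝓝 |L|) := by
            have h1 := hR.abs
            rwa [abs_neg] at h1
          exact le_of_tendsto habs hev2
        have hspl := hsplit 0 s t le_rfl hs0.le hst.le ht.2
        linarith
  have speed : ∀ t : ℝ, t ∈ Set.Icc 0 T → t ∉ S → V ≤ |y.xd t| := by
    intro t ht htS
    have h1 := speedA (S ∩ Set.Iio t).ncard t ht htS le_rfl
    have h2 := hIleM 0 t le_rfl ht.1 ht.2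
    rw [hVdef]; linarith
  -- gap lemma
  have gap : ∀ p q : ℝ, 0 ≤ p → p ≤ q → q ≤ T → (∀ τ ∈ Set.Ioo p q, τ ∉ S) →
      q - p ≤ 2 * a / V := by
    intro p q hp hpq hqT hno
    rcases eq_or_lt_of_le hpq with rfl | hlt
    · simp only [sub_self]
      positivity
    · have hD : ∀ τ ∈ Set.Ioo p q, HasDerivAt y.x (y.xd τ) τ := by
        intro τ hτ
        have hmem : τ ∈ Set.Icc 0 T \ S := ⟨⟨hp.trans hτ.1.le, hτ.2.le.trans hqT⟩, hno τ hτ⟩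
        exact (y.hasDeriv τ hmem).hasDerivAt
          (Icc_mem_nhds (lt_of_le_of_lt hp hτ.1) (lt_of_lt_of_le hτ.2 hqT))
      set t₀ := (p + q) / 2 with ht₀def
      have ht₀ : t₀ ∈ Set.Ioo p q := ⟨by rw [ht₀def]; linarith, by rw [ht₀def]; linarith⟩
      have hVmem : ∀ τ ∈ Set.Ioo p q, V ≤ |y.xd τ| := fun τ hτ =>
        speed τ ⟨hp.trans hτ.1.le, hτ.2.le.trans hqT⟩ (hno τ hτ)
      have hdiff : ∀ τ ∈ Set.Ioo p q, |y.xd τ - y.xd t₀| ≤ M := by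
        have hIoo : ∀ u v' : ℝ, u ∈ Set.Ioo p q → v' ∈ Set.Ioo p q → u ≤ v' →
            |y.xd v' - y.xd u| ≤ M := by
          intro u v' hu hv huv
          have hnoi : ∀ σ ∈ Set.Icc u v', σ ∉ S := fun σ hσ =>
            hno σ ⟨lt_of_lt_of_le hu.1 hσ.1, lt_of_le_of_lt hσ.2 hv.2⟩
          have hu0 : 0 ≤ u := hp.trans hu.1.le
          have hvT : v' ≤ T := hv.2.le.trans hqT
          have hacc := y.accel u v' ⟨hu0, hu.2.le.trans hqT⟩ ⟨hp.trans hv.1.le, hvT⟩ huv hnoi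
          have hb := hFbound u v' hu0 huv hvT
          have hle := hIleM u v' hu0 huv hvT
          have heq : y.xd v' - y.xd u = ∫ τ in u..v', f τ (y.x τ) := by linarith
          rw [heq]
          linarith
        intro τ hτ
        rcases le_total τ t₀ with h | h
        · have h1 := hIoo τ t₀ hτ ht₀ h
          rwa [abs_sub_comm] at h1
        · exact hIoo t₀ τ ht₀ hτ h
      have ht₀V := hVmem t₀ ht₀
      have hcont : ContinuousOn y.x (Set.Icc p q) := y.cont.mono (Set.Icc_subset_Icc hp hqT)
      have hdiffOn : DifferentiableOn ℝ y.x (interior (Set.Icc p q)) := by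
        rw [interior_Icc]
        exact fun τ hτ => (hD τ hτ).differentiableAt.differentiableWithinAt
      have h2a := habs2a p q ⟨hp, hpq.trans hqT⟩ ⟨hp.trans hpq, hqT⟩
      have h2a' := abs_le.mp h2a
      rcases le_abs.mp ht₀V with hpos | hneg
      · have hsgn : ∀ τ ∈ Set.Ioo p q, V ≤ y.xd τ := by
          intro τ hτ
          rcases le_abs.mp (hVmem τ hτ) with h | h
          · exact h
          · exfalso
            have hd := abs_le.mp (hdiff τ hτ)
            linarith
        have hmvt := (convex_Icc p q).mul_sub_le_image_sub_of_le_deriv hcont hdiffOn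
          (fun τ hτ => by rw [interior_Icc] at hτ; rw [(hD τ hτ).deriv]; exact hsgn τ hτ)
          p (Set.left_mem_Icc.mpr hpq) q (Set.right_mem_Icc.mpr hpq) hpq
        rw [le_div_iff₀ hV0]
        nlinarith
      · have hsgn : ∀ τ ∈ Set.Ioo p q, y.xd τ ≤ -V := by
          intro τ hτ
          rcases le_abs.mp (hVmem τ hτ) with h | h
          · exfalso
            have hd := abs_le.mp (hdiff τ hτ)
            linarith
          · linarith
        have hmvt := (convex_Icc p q).image_sub_le_mul_sub_of_deriv_le hcont hdiffOn
          (fun τ hτ => by rw [interior_Icc] at hτ; rw [(hD τ hτ).deriv]; exact hsgn τ hτ)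
          p (Set.left_mem_Icc.mpr hpq) q (Set.right_mem_Icc.mpr hpq) hpq
        rw [le_div_iff₀ hV0]
        nlinarith
  -- counting
  have count : ∀ n : ℕ, ∀ t : ℝ, t ∈ Set.Icc 0 T → (S ∩ Set.Ioc 0 t).ncard ≤ n →
      t ≤ ((n : ℝ) + 1) * (2 * a / V) := by
    have h2aV : 0 ≤ 2 * a / V := by positivity
    have hbase : ∀ t : ℝ, t ∈ Set.Icc 0 T → S ∩ Set.Ioc 0 t = ∅ → t ≤ 2 * a / V := by
      intro t ht hemp
      have h1 := gap 0 t le_rfl ht.1 ht.2 (fun τ hτ hτS => by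
        have hmem : τ ∈ S ∩ Set.Ioc 0 t := ⟨hτS, hτ.1, hτ.2.le⟩
        rw [hemp] at hmem
        exact hmem)
      linarith
    intro n
    induction n with
    | zero =>
      intro t ht hc
      have hfin : (S ∩ Set.Ioc 0 t).Finite := hSfin.subset Set.inter_subset_left
      have h1 := hbase t ht ((Set.ncard_eq_zero hfin).mp (Nat.le_zero.mp hc))
      norm_num
      linarith
    | succ n ih =>
      intro t ht hc
      have hexp : (((n:ℕ) + 1 : ℕ) : ℝ) + 1 = ((n:ℝ) + 1) + 1 := by push_cast; ring
      by_cases hemp : S ∩ Set.Ioc 0 t = ∅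
      · have h1 := hbase t ht hemp
        have h2 : (0:ℝ) ≤ ((n:ℝ) + 1) * (2 * a / V) := by positivity
        rw [hexp]
        nlinarith
      · have hAfin : (S ∩ Set.Ioc 0 t).Finite := hSfin.subset Set.inter_subset_left
        have hAne := Set.nonempty_iff_ne_empty.mpr hemp
        obtain ⟨s, hsA, hsmax'⟩ := Set.Finite.exists_maximalFor id _ hAfin hAne
        have hsmax : ∀ b ∈ S ∩ Set.Ioc 0 t, b ≤ s := by
          intro b hb
          by_contra hbs
          push_neg at hbs
          exact absurd (hsmax' hb hbs.le) (not_le.mpr hbs)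
        have hs0 : 0 < s := hsA.2.1
        have hst : s ≤ t := hsA.2.2
        have hsT : s ≤ T := hst.trans ht.2
        have hgap : t - s ≤ 2 * a / V := gap s t hs0.le hst ht.2 (fun τ hτ hτS => by
          have hmem := hsmax τ ⟨hτS, hs0.trans hτ.1, hτ.2.le⟩
          exact absurd hmem (not_le.mpr hτ.1))
        refine le_of_forall_pos_le_add ?_
        intro ε hε
        have hl : max (s - ε) 0 < s := max_lt (by linarith) hs0
        obtain ⟨t', ht'⟩ := ((Set.Ioo_infinite hl).diff hSfin).nonempty
        obtain ⟨⟨hlt', ht's⟩, ht'S⟩ := ht'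
        have ht'0 : 0 ≤ t' := le_of_lt (lt_of_le_of_lt (le_max_right _ _) hlt')
        have ht'T : t' ≤ T := (ht's.trans_le hsT).le
        have hcard : (S ∩ Set.Ioc 0 t').ncard ≤ n := by
          have hsubA : S ∩ Set.Ioc 0 t' ⊆ (S ∩ Set.Ioc 0 t) \ {s} := by
            intro τ hτ
            refine ⟨⟨hτ.1, hτ.2.1, hτ.2.2.trans (ht's.le.trans hst)⟩, ?_⟩
            intro h
            rw [Set.mem_singleton_iff] at h
            rw [h] at hτ
            exact absurd (hτ.2.2.trans_lt ht's) (lt_irrefl s)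
          have h1 := Set.ncard_le_ncard hsubA hAfin.diff
          rw [Set.ncard_diff_singleton_of_mem hsA] at h1
          omega
        have hih := ih t' ⟨ht'0, ht'T⟩ hcard
        have hεs : s - t' < ε := by
          have h1 := le_max_left (s - ε) 0
          linarith
        have hring : (((n:ℝ) + 1) + 1) * (2 * a / V) = ((n:ℝ) + 1) * (2 * a / V) + 2 * a / V := by
          ring
        rw [hexp, hring]
        linarith
  have hST : S ∩ Set.Ioc 0 T = S := Set.inter_eq_left.mpr hSsub
  have := count S.ncard T ⟨hT.le, le_rfl⟩ (by rw [hST])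
  exact this

theorem impacts_increase_with_speed
    (T a : ℝ) (hT : 0 < T) (ha : 0 < a)
    (f : ℝ → ℝ → ℝ) (m : ℝ → ℝ)
    -- (H1): `f` is a Carathéodory function, integrably bounded by `m`
    (hf_meas : ∀ y : ℝ, Measurable fun t => f t y)
    (hf_cont : ∀ᵐ t ∂(volume : Measure ℝ), t ∈ Set.Icc 0 T → Continuous fun y => f t y)
    (hm_int : IntervalIntegrable m volume 0 T)
    (hm_nonneg : ∀ t ∈ Set.Icc 0 T, 0 ≤ m t)
    (hf_bound : ∀ t ∈ Set.Icc 0 T, ∀ y : ℝ, |f t y| ≤ m t)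
    -- (H2): `f` is Lipschitz in the second variable with integrable constant
    (hf_lip : ∃ α : ℝ → ℝ, IntervalIntegrable α volume 0 T ∧
      ∀ᵐ t ∂(volume : Measure ℝ), t ∈ Set.Icc 0 T → ∀ y z : ℝ, |f t y - f t z| ≤ α t * |y - z|)
    (v : ℝ) (hv : v ≠ 0)
    (xv : BilliardSol T a f v) (k : ℕ)
    (hk : (impactSet T a xv.x).ncard = k) :
    ∃ c > (0:ℝ), ∀ xcv : BilliardSol T a f (c * v),
      k + 2 ≤ (impactSet T a xcv.x).ncard := by
  classical
  set M : ℝ := ∫ τ in (0:ℝ)..T, m τ with hMdef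
  have hM0 : 0 ≤ M := intervalIntegral.integral_nonneg hT.le hm_nonneg
  have hv0 : 0 < |v| := abs_pos.mpr hv
  set c : ℝ := (2 * M + 2 * a * ((k:ℝ) + 3) / T + 1) / |v| with hcdef
  have hnum : 0 < 2 * M + 2 * a * ((k:ℝ) + 3) / T + 1 := by positivity
  have hc : 0 < c := div_pos hnum hv0
  refine ⟨c, hc, ?_⟩
  intro xcv
  have hcv : |c * v| = 2 * M + 2 * a * ((k:ℝ) + 3) / T + 1 := by
    rw [abs_mul, abs_of_pos hc, hcdef, div_mul_cancel₀ _ (ne_of_gt hv0)]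
  have hpos2 : 0 < 2 * a * ((k:ℝ) + 3) / T := by positivity
  have hbig : 2 * M < |c * v| := by rw [hcv]; linarith
  have hkey := billiard_time_bound T a hT ha f m hm_int hm_nonneg hf_bound (c * v) hbig xcv
  set N := (impactSet T a xcv.x).ncard with hNdef
  set V : ℝ := |c * v| - M with hVdef
  have hVeq : V = M + 2 * a * ((k:ℝ) + 3) / T + 1 := by rw [hVdef, hcv]; ring
  have hV0 : 0 < V := by rw [hVeq]; positivity
  have h1 : T * V ≤ ((N:ℝ) + 1) * (2 * a) := by
    have h := mul_le_mul_of_nonneg_right hkey hV0.le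
    rw [mul_assoc, div_mul_cancel₀ _ (ne_of_gt hV0)] at h
    exact h
  have h2 : 2 * a * ((k:ℝ) + 3) < T * V := by
    have hTe : T * (2 * a * ((k:ℝ) + 3) / T) = 2 * a * ((k:ℝ) + 3) := by
      field_simp
    nlinarith [mul_nonneg hT.le hM0, hT]
  have h3 : (k:ℝ) + 3 < (N:ℝ) + 1 := by nlinarith
  have h4 : k + 3 < N + 1 := by exact_mod_cast h3
  omega
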